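/- Let λ > 0, d > 0, f(t) = λ θ(t−d) e^{−λ(t−d)}, and let A : ℝ → ℝ be continuous and bounded. If A(t) = ∫_0^∞ f(s) A(t−s) ds for all t ≥ d, then A is differentiable on (d, ∞) and A'(t) = λ A(t−d) − λ A(t) for all t > d. -/

import Mathlib

open MeasureTheory Set

/-- with `f(t) = lam·θ(t-d)·e^{-lam(t-d)}`, if a continuous bounded
function `A` satisfies the convolution invariance `A(t) = ∫_0^∞ f(s) A(t-s) ds` for
all `t ≥ d`, then `A` is differentiable on `(d, ∞)` with
`A'(t) = lam·A(t-d) - lam·A(t)` there. -/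
theorem stmt_5 (lam d : ℝ) (hlam : 0 < lam) (hd : 0 < d)
    (f A : ℝ → ℝ)
    (hf : ∀ t : ℝ, f t = if d ≤ t then lam * Real.exp (-lam * (t - d)) else 0)
    (hA : Continuous A) (hAb : ∃ C : ℝ, ∀ t : ℝ, |A t| ≤ C)
    (hconv : ∀ t : ℝ, d ≤ t → A t = ∫ s in Set.Ioi (0 : ℝ), f s * A (t - s)) :
    ∀ t : ℝ, d < t → HasDerivAt A (lam * A (t - d) - lam * A t) t := by
  obtain ⟨C, hC⟩ := hAb
  set h : ℝ → ℝ := fun u => Real.exp (lam * u) * A u with hhdef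
  have hhcont : Continuous h :=
    (Real.continuous_exp.comp (continuous_const.mul continuous_id)).mul hA
  -- integrability of `exp (lam*u)` on `Iic x`
  have hexpint : ∀ x : ℝ, IntegrableOn (fun u => Real.exp (lam * u)) (Set.Iic x) := by
    intro x
    have h1 : Integrable ((Set.Iic (lam * x)).indicator Real.exp) :=
      (integrable_indicator_iff measurableSet_Iic).mpr (integrableOn_exp_Iic _)
    have h2 := h1.comp_mul_left' hlam.ne'
    rw [← integrable_indicator_iff measurableSet_Iic]
    have : (Set.Iic x).indicator (fun u => Real.exp (lam * u)) =
        fun u => (Set.Iic (lam * x)).indicator Real.exp (lam * u) := by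
      funext u
      simp only [Set.indicator_apply, Set.mem_Iic]
      by_cases hu : u ≤ x
      · rw [if_pos hu, if_pos (mul_le_mul_of_nonneg_left hu hlam.le)]
      · rw [if_neg hu, if_neg (fun hmem => hu (le_of_mul_le_mul_left hmem hlam))]
    rw [this]
    exact h2
  -- integrability of `h` on `Iic x`
  have hint : ∀ x : ℝ, IntegrableOn h (Set.Iic x) := by
    intro x
    refine Integrable.mono ((hexpint x).const_mul C) hhcont.aestronglyMeasurable.restrict ?_
    filter_upwards with u
    have h1 : |h u| = Real.exp (lam * u) * |A u| := by
      rw [hhdef, abs_mul, abs_of_pos (Real.exp_pos _)]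
    have h2 : Real.exp (lam * u) * |A u| ≤ C * Real.exp (lam * u) := by
      rw [mul_comm C]
      exact mul_le_mul_of_nonneg_left (hC u) (Real.exp_pos _).le
    calc ‖h u‖ = |h u| := rfl
      _ ≤ C * Real.exp (lam * u) := by rw [h1]; exact h2
      _ ≤ |C * Real.exp (lam * u)| := le_abs_self _
      _ = ‖C * Real.exp (lam * u)‖ := rfl
  set g : ℝ → ℝ := fun x => ∫ u in Set.Iic x, h u with hgdef
  -- the key representation
  have hkey : ∀ t : ℝ, d ≤ t → A t = lam * Real.exp (-lam * (t - d)) * g (t - d) := by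
    intro t ht
    have e1 : (∫ s in Set.Ioi (0 : ℝ), f s * A (t - s)) = ∫ s, f s * A (t - s) := by
      rw [← integral_indicator measurableSet_Ioi]
      congr 1
      funext s
      by_cases hs : s ∈ Set.Ioi (0 : ℝ)
      · rw [Set.indicator_of_mem hs]
      · rw [Set.indicator_of_notMem hs, hf, if_neg (by simp at hs; linarith), zero_mul]
    have e2 : (∫ s, f s * A (t - s)) = ∫ u, f (t - u) * A u := by
      have := integral_sub_left_eq_self (fun s => f s * A (t - s)) volume t
      simp only [sub_sub_cancel] at this
      exact this.symm
    have e3 : ∀ u : ℝ, f (t - u) * A u =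
        (Set.Iic (t - d)).indicator
          (fun u => lam * Real.exp (-lam * (t - d)) * h u) u := by
      intro u
      rw [hf]
      simp only [Set.indicator_apply, Set.mem_Iic]
      by_cases hu : u ≤ t - d
      · rw [if_pos (by linarith : d ≤ t - u), if_pos hu, hhdef]
        have : Real.exp (-lam * (t - u - d)) =
            Real.exp (-lam * (t - d)) * Real.exp (lam * u) := by
          rw [← Real.exp_add]; ring_nf
        simp only []
        rw [this]; ring
      · rw [if_neg (by linarith : ¬ d ≤ t - u), if_neg hu, zero_mul]
    rw [hconv t ht, e1, e2]
    simp_rw [e3]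
    rw [integral_indicator measurableSet_Iic, integral_const_mul]
  -- derivative of g
  have hg : ∀ x : ℝ, HasDerivAt g (h x) x := by
    intro x
    have hFTC : HasDerivAt (fun y => ∫ u in (x - 1)..y, h u) (h x) x :=
      intervalIntegral.integral_hasDerivAt_right (hhcont.intervalIntegrable _ _)
        (hhcont.stronglyMeasurableAtFilter _ _) hhcont.continuousAt
    have heq : (fun y => g (x - 1) + ∫ u in (x - 1)..y, h u) =ᶠ[nhds x] g := by
      filter_upwards with y
      have : g y - g (x - 1) = ∫ u in (x - 1)..y, h u :=
        intervalIntegral.integral_Iic_sub_Iic (hint _) (hint _)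
      linarith
    exact (HasDerivAt.congr_of_eventuallyEq (hFTC.const_add (g (x - 1))) heq.symm)
  -- conclude
  intro t ht
  have hB : HasDerivAt (fun y => lam * Real.exp (-lam * (y - d)) * g (y - d))
      (lam * A (t - d) - lam * A t) t := by
    have hE : HasDerivAt (fun y => Real.exp (-lam * (y - d)))
        (-lam * Real.exp (-lam * (t - d))) t := by
      have h1 : HasDerivAt (fun y : ℝ => -lam * (y - d)) (-lam) t :=
        ((hasDerivAt_id t).sub_const d).const_mul (-lam) |>.congr_deriv (by ring)
      have := h1.exp
      convert this using 1
      ring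
    have hG : HasDerivAt (fun y => g (y - d)) (h (t - d)) t := by
      have h1 : HasDerivAt (fun y : ℝ => y - d) 1 t := (hasDerivAt_id t).sub_const d
      have := (hg (t - d)).comp t h1
      simpa [Function.comp_def] using this
    have hmul := (hE.mul hG).const_mul lam
    have harith : lam * (-lam * Real.exp (-lam * (t - d)) * g (t - d) +
        Real.exp (-lam * (t - d)) * h (t - d)) = lam * A (t - d) - lam * A t := by
      have hht : h (t - d) = Real.exp (lam * (t - d)) * A (t - d) := rfl
      have hexp : Real.exp (-lam * (t - d)) * Real.exp (lam * (t - d)) = 1 := by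
        rw [← Real.exp_add]; ring_nf; exact Real.exp_zero
      have hAt : A t = lam * Real.exp (-lam * (t - d)) * g (t - d) := hkey t ht.le
      rw [hht]
      calc lam * (-lam * Real.exp (-lam * (t - d)) * g (t - d) +
            Real.exp (-lam * (t - d)) * (Real.exp (lam * (t - d)) * A (t - d)))
          = -lam * (lam * Real.exp (-lam * (t - d)) * g (t - d)) +
            lam * ((Real.exp (-lam * (t - d)) * Real.exp (lam * (t - d))) * A (t - d)) := by
            ring
        _ = lam * A (t - d) - lam * A t := by rw [hexp, ← hAt]; ring
    rw [← harith]
    have hfun : (fun y => lam * Real.exp (-lam * (y - d)) * g (y - d)) =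
        (fun y => lam * ((fun y => Real.exp (-lam * (y - d))) * fun y => g (y - d)) y) := by
      funext y; simp only [Pi.mul_apply]; ring
    rw [hfun]; exact hmul
  have hAeq : (fun y => lam * Real.exp (-lam * (y - d)) * g (y - d)) =ᶠ[nhds t] A := by
    filter_upwards [eventually_gt_nhds ht] with y hy
    exact (hkey y hy.le).symm
  exact hB.congr_of_eventuallyEq hAeq.symm
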